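/- arXiv:1104.1776 — 7 statements merged into one kernel-verified Lean document; each statement's English description precedes it below -/
import Mathlib

section
/- Let u, v ∈ ℂ³ with u ≠ 0, and let A : Matrix (Fin 3) (Fin 3) ℂ. Then the matrix (vecMulVec u v) * A (i.e., u vᵀ A) is symmetric if and only if there exists b ∈ ℂ such that A.vecMul v = b • u (i.e., vᵀ A = b uᵀ). -/
open Matrix

/-- `u vᵀ A` is symmetric iff `vᵀ A = b uᵀ` for some `b ∈ ℂ`. -/
theorem vecMulVec_mul_symm_iff (u v : Fin 3 → ℂ) (hu : u ≠ 0)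
    (A : Matrix (Fin 3) (Fin 3) ℂ) :
    (Matrix.vecMulVec u v * A)ᵀ = Matrix.vecMulVec u v * A ↔
      ∃ b : ℂ, A.vecMul v = b • u := by
  have entry : ∀ i j, (Matrix.vecMulVec u v * A) i j = u i * (A.vecMul v) j := by
    intro i j
    simp [Matrix.mul_apply, Matrix.vecMulVec_apply, Matrix.vecMul, dotProduct,
      Finset.mul_sum, mul_assoc]
  constructor
  · intro h
    obtain ⟨i0, hi0⟩ : ∃ i, u i ≠ 0 := by
      by_contra hc; push_neg at hc; exact hu (funext hc)
    refine ⟨(A.vecMul v) i0 / u i0, funext fun j => ?_⟩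
    have key : u i0 * (A.vecMul v) j = u j * (A.vecMul v) i0 := by
      have := congrFun (congrFun h j) i0
      rw [Matrix.transpose_apply, entry, entry] at this
      exact this
    have : (A.vecMul v) j = (A.vecMul v) i0 / u i0 * u j := by
      field_simp
      linear_combination key
    simpa [Pi.smul_apply, smul_eq_mul] using this
  · rintro ⟨b, hb⟩
    ext i j
    rw [Matrix.transpose_apply, entry, entry, hb]
    simp [mul_comm, mul_left_comm]
end

section
/- Let X : Fin 3 → Fin 3 → Fin 4 → ℂ be a tensor whose frontal slices have the block pattern X i 2 k = 0 for i ∈ {0,1} and X 2 j k = 0 for j ∈ {0,1}, for all k (i.e., x_{1,3,k} = x_{2,3,k} = x_{3,1,k} = x_{3,2,k} = 0 for all k in 1-based notation). If f(X) = 0, where f(X) is the determinant of the 4×4 matrix whose k-th row is (X 0 0 k, X 0 1 k, X 1 0 k, X 1 1 k), then X has border rank at most 4. -/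
open ComplexConjugate

/-- A tensor `X : Fin m → Fin n → Fin l → ℂ` has rank at most `r`. -/
def rankAtMost {m n l : ℕ} (r : ℕ) (X : Fin m → Fin n → Fin l → ℂ) : Prop :=
  ∃ (a : Fin r → Fin m → ℂ) (b : Fin r → Fin n → ℂ) (c : Fin r → Fin l → ℂ),
    ∀ i j k, X i j k = ∑ p, a p i * b p j * c p k

/-- A tensor has border rank at most `r` if it is in the closure of the set of
tensors of rank at most `r`. -/
def borderRankAtMost {m n l : ℕ} (r : ℕ) (X : Fin m → Fin n → Fin l → ℂ) : Prop :=
  X ∈ closure {Y : Fin m → Fin n → Fin l → ℂ | rankAtMost r Y}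

/-- If the slices of `X` satisfy a linear relation given by a `2×2` matrix `g` with
nonzero determinant, then `X` has (exact) rank at most 4. -/
lemma rank4_of_rel (X : Fin 3 → Fin 3 → Fin 4 → ℂ) (g : Fin 4 → ℂ)
    (h02 : ∀ k, X 0 2 k = 0) (h12 : ∀ k, X 1 2 k = 0)
    (h20 : ∀ k, X 2 0 k = 0) (h21 : ∀ k, X 2 1 k = 0)
    (hrel : ∀ k, g 0 * X 0 0 k + g 1 * X 0 1 k + g 2 * X 1 0 k + g 3 * X 1 1 k = 0)
    (hD : g 0 * g 3 - g 1 * g 2 ≠ 0) : rankAtMost 4 X := by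
  refine ⟨![![1,0,0], ![0,1,0], ![1,1,0], ![0,0,1]],
    ![![g 1, -g 0, 0], ![g 3, -g 2, 0], ![g 1 + g 3, -(g 0 + g 2), 0], ![0,0,1]],
    ![fun k => (-(g 2 * X 0 0 k + g 3 * X 0 1 k) - (g 0 * X 0 0 k + g 1 * X 0 1 k)) / (g 0 * g 3 - g 1 * g 2),
      fun k => ((g 0 * X 1 0 k + g 1 * X 1 1 k) - (g 0 * X 0 0 k + g 1 * X 0 1 k)) / (g 0 * g 3 - g 1 * g 2),
      fun k => (g 0 * X 0 0 k + g 1 * X 0 1 k) / (g 0 * g 3 - g 1 * g 2),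
      fun k => X 2 2 k], ?_⟩
  intro i j k
  fin_cases i <;> fin_cases j <;>
    simp [Fin.sum_univ_four, h02, h12, h20, h21] <;>
    field_simp
  · rw [eq_div_iff (by intro h; apply hD; linear_combination h)]; linear_combination (0:ℂ) * hrel k
  · rw [eq_div_iff (by intro h; apply hD; linear_combination h)]; linear_combination (0:ℂ) * hrel k
  · rw [eq_div_iff (by intro h; apply hD; linear_combination h)]; linear_combination (-(g 1) - 1 + 1) * hrel k
  · rw [eq_div_iff (by intro h; apply hD; linear_combination h)]; linear_combination (g 0) * hrel k

/-- The perturbed relation vector. -/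
noncomputable def gg (g : Fin 4 → ℂ) (ε : ℝ) : Fin 4 → ℂ :=
  ![g 0 + ε * conj (g 3), g 1 - ε * conj (g 2), g 2 - ε * conj (g 1), g 3 + ε * conj (g 0)]

/-- The squared norm of the perturbed relation vector. -/
noncomputable def cc (g : Fin 4 → ℂ) (ε : ℝ) : ℂ :=
  gg g ε 0 * conj (gg g ε 0) + gg g ε 1 * conj (gg g ε 1) +
  gg g ε 2 * conj (gg g ε 2) + gg g ε 3 * conj (gg g ε 3)

/-- The defect of the relation for the perturbation direction. -/
noncomputable def tt (X : Fin 3 → Fin 3 → Fin 4 → ℂ) (g : Fin 4 → ℂ) (k : Fin 4) : ℂ :=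
  conj (g 3) * X 0 0 k - conj (g 2) * X 0 1 k - conj (g 1) * X 1 0 k + conj (g 0) * X 1 1 k

/-- The perturbed tensor. -/
noncomputable def FF (X : Fin 3 → Fin 3 → Fin 4 → ℂ) (g : Fin 4 → ℂ) (ε : ℝ) :
    Fin 3 → Fin 3 → Fin 4 → ℂ := fun i j k =>
  X i j k - (↑ε * tt X g k / cc g ε) *
    conj (![![gg g ε 0, gg g ε 1, 0], ![gg g ε 2, gg g ε 3, 0], ![0, 0, 0]] i j)

lemma cc_ne_zero (g : Fin 4 → ℂ) (ε : ℝ) (hε1 : ε ^ 2 < 1) (hg : g ≠ 0) :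
    cc g ε ≠ 0 := by
  intro h0
  have hcast : ((Complex.normSq (gg g ε 0) + Complex.normSq (gg g ε 1) +
      Complex.normSq (gg g ε 2) + Complex.normSq (gg g ε 3) : ℝ) : ℂ) = 0 := by
    rw [← h0]; unfold cc; push_cast [Complex.mul_conj]; ring
  have hr : Complex.normSq (gg g ε 0) + Complex.normSq (gg g ε 1) +
      Complex.normSq (gg g ε 2) + Complex.normSq (gg g ε 3) = 0 := by exact_mod_cast hcast
  have n0 := Complex.normSq_nonneg (gg g ε 0)
  have n1 := Complex.normSq_nonneg (gg g ε 1)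
  have n2 := Complex.normSq_nonneg (gg g ε 2)
  have n3 := Complex.normSq_nonneg (gg g ε 3)
  have e0 : gg g ε 0 = 0 := by rw [← Complex.normSq_eq_zero]; linarith
  have e1 : gg g ε 1 = 0 := by rw [← Complex.normSq_eq_zero]; linarith
  have e2 : gg g ε 2 = 0 := by rw [← Complex.normSq_eq_zero]; linarith
  have e3 : gg g ε 3 = 0 := by rw [← Complex.normSq_eq_zero]; linarith
  simp [gg] at e0 e1 e2 e3
  have hfact : (1 - (ε:ℂ)^2) ≠ 0 := by
    intro h
    have h' : ((1 - ε^2 : ℝ) : ℂ) = 0 := by push_cast; linear_combination h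
    have : (1 - ε^2 : ℝ) = 0 := by exact_mod_cast h'
    nlinarith
  have ce3 : conj (g 3) + ε * g 0 = 0 := by
    have := congrArg conj e3; simpa using this
  have hg0 : g 0 = 0 := by
    have : (1 - (ε:ℂ)^2) * g 0 = 0 := by linear_combination e0 - (ε:ℂ) * ce3
    exact (mul_eq_zero.mp this).resolve_left hfact
  have hg3 : g 3 = 0 := by
    have : (1 - (ε:ℂ)^2) * g 3 = 0 := by
      have ce0 : conj (g 0) + ε * g 3 = 0 := by
        have := congrArg conj e0; simpa using this
      linear_combination e3 - (ε:ℂ) * ce0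
    exact (mul_eq_zero.mp this).resolve_left hfact
  have ce2 : conj (g 2) - ε * g 1 = 0 := by
    have := congrArg conj e2; simpa using this
  have hg1 : g 1 = 0 := by
    have : (1 - (ε:ℂ)^2) * g 1 = 0 := by linear_combination e1 + (ε:ℂ) * ce2
    exact (mul_eq_zero.mp this).resolve_left hfact
  have hg2 : g 2 = 0 := by
    have : (1 - (ε:ℂ)^2) * g 2 = 0 := by
      have ce1 : conj (g 1) - ε * g 2 = 0 := by
        have := congrArg conj e1; simpa using this
      linear_combination e2 + (ε:ℂ) * ce1
    exact (mul_eq_zero.mp this).resolve_left hfact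
  exact hg (by funext i; fin_cases i <;> simpa [hg0, hg1, hg2, hg3])

lemma FF_rel (X : Fin 3 → Fin 3 → Fin 4 → ℂ) (g : Fin 4 → ℂ) (ε : ℝ)
    (hcc : cc g ε ≠ 0)
    (hrel : ∀ k, g 0 * X 0 0 k + g 1 * X 0 1 k + g 2 * X 1 0 k + g 3 * X 1 1 k = 0)
    (k : Fin 4) :
    gg g ε 0 * FF X g ε 0 0 k + gg g ε 1 * FF X g ε 0 1 k +
    gg g ε 2 * FF X g ε 1 0 k + gg g ε 3 * FF X g ε 1 1 k = 0 := by
  have key : gg g ε 0 * FF X g ε 0 0 k + gg g ε 1 * FF X g ε 0 1 k +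
      gg g ε 2 * FF X g ε 1 0 k + gg g ε 3 * FF X g ε 1 1 k =
      (gg g ε 0 * X 0 0 k + gg g ε 1 * X 0 1 k + gg g ε 2 * X 1 0 k + gg g ε 3 * X 1 1 k)
      - (↑ε * tt X g k / cc g ε) * cc g ε := by
    simp only [FF, cc]; simp; ring
  have h1 : gg g ε 0 * X 0 0 k + gg g ε 1 * X 0 1 k + gg g ε 2 * X 1 0 k + gg g ε 3 * X 1 1 k
      = ↑ε * tt X g k := by
    simp [gg, tt]; linear_combination hrel k
  rw [key, h1, div_mul_cancel₀ _ hcc, sub_self]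

lemma FF_det (g : Fin 4 → ℂ) (ε : ℝ) (hdet : g 0 * g 3 - g 1 * g 2 = 0) (hε : ε ≠ 0)
    (hg : g ≠ 0) :
    gg g ε 0 * gg g ε 3 - gg g ε 1 * gg g ε 2 ≠ 0 := by
  have hdetc : conj (g 0) * conj (g 3) - conj (g 1) * conj (g 2) = 0 := by
    have := congrArg conj hdet; simpa using this
  have hm : gg g ε 0 * gg g ε 3 - gg g ε 1 * gg g ε 2 =
      ↑ε * ((Complex.normSq (g 0) + Complex.normSq (g 1) + Complex.normSq (g 2) +
        Complex.normSq (g 3) : ℝ) : ℂ) := by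
    push_cast [← Complex.mul_conj]
    simp [gg]
    linear_combination hdet + (ε:ℂ)^2 * hdetc
  rw [hm]
  refine mul_ne_zero (by exact_mod_cast hε) ?_
  have : Complex.normSq (g 0) + Complex.normSq (g 1) + Complex.normSq (g 2) +
      Complex.normSq (g 3) ≠ 0 := by
    intro h
    have n0 := Complex.normSq_nonneg (g 0)
    have n1 := Complex.normSq_nonneg (g 1)
    have n2 := Complex.normSq_nonneg (g 2)
    have n3 := Complex.normSq_nonneg (g 3)
    have e0 : g 0 = 0 := by rw [← Complex.normSq_eq_zero]; linarith
    have e1 : g 1 = 0 := by rw [← Complex.normSq_eq_zero]; linarith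
    have e2 : g 2 = 0 := by rw [← Complex.normSq_eq_zero]; linarith
    have e3 : g 3 = 0 := by rw [← Complex.normSq_eq_zero]; linarith
    exact hg (by funext i; fin_cases i <;> simpa [e0, e1, e2, e3])
  exact_mod_cast this

lemma contAux (z d : ℂ) (C W : ℝ → ℂ) (hC : Continuous C) (hC0 : C 0 ≠ 0)
    (hW : Continuous W) :
    ContinuousAt (fun ε : ℝ => z - ↑ε * d / C ε * W ε) 0 := by
  apply ContinuousAt.sub continuousAt_const
  exact ((Complex.continuous_ofReal.continuousAt.mul continuousAt_const).div
    hC.continuousAt hC0).mul hW.continuousAt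

lemma FF_tendsto (X : Fin 3 → Fin 3 → Fin 4 → ℂ) (g : Fin 4 → ℂ) (hc0 : cc g 0 ≠ 0) :
    Filter.Tendsto (fun n : ℕ => FF X g (((n : ℝ) + 2)⁻¹)) Filter.atTop (nhds X) := by
  have hu : Filter.Tendsto (fun n : ℕ => ((n : ℝ) + 2)⁻¹) Filter.atTop (nhds 0) := by
    apply Filter.Tendsto.comp tendsto_inv_atTop_zero
    exact Filter.tendsto_atTop_add_const_right _ 2 tendsto_natCast_atTop_atTop
  have hF0 : FF X g 0 = X := by funext i j k; simp [FF]
  have hC : Continuous fun ε : ℝ => cc g ε := by unfold cc gg; simp; fun_prop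
  have hW : ∀ a : Fin 4, Continuous fun ε : ℝ => conj (gg g ε a) := by
    intro a; fin_cases a <;> · unfold gg; simp; fun_prop
  rw [tendsto_pi_nhds]; intro i
  rw [tendsto_pi_nhds]; intro j
  rw [tendsto_pi_nhds]; intro k
  have hWij : ∀ i j : Fin 3, Continuous fun ε : ℝ =>
      conj (![![gg g ε 0, gg g ε 1, 0], ![gg g ε 2, gg g ε 3, 0], ![(0:ℂ), 0, 0]] i j) := by
    intro i j
    fin_cases i <;> fin_cases j <;> simp <;>
      first
        | exact continuous_const
        | exact hW _
  have hcont : ContinuousAt (fun ε : ℝ => FF X g ε i j k) 0 := by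
    simp only [FF]
    exact contAux _ _ _ _ hC hc0 (hWij i j)
  have := hcont.tendsto.comp hu
  simpa [hF0, Function.comp_def] using this

/-- If the frontal slices of `X` have the block pattern and the 4×4 determinant `f(X)`
vanishes, then `X` has border rank at most 4. -/
theorem borderRank_le_four_of_det_eq_zero (X : Fin 3 → Fin 3 → Fin 4 → ℂ)
    (h02 : ∀ k, X 0 2 k = 0) (h12 : ∀ k, X 1 2 k = 0)
    (h20 : ∀ k, X 2 0 k = 0) (h21 : ∀ k, X 2 1 k = 0)
    (hf : (Matrix.of fun k : Fin 4 => ![X 0 0 k, X 0 1 k, X 1 0 k, X 1 1 k]).det = 0) :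
    borderRankAtMost 4 X := by
  obtain ⟨g, hg, hgv⟩ := Matrix.exists_mulVec_eq_zero_iff.mpr hf
  have hrel : ∀ k, g 0 * X 0 0 k + g 1 * X 0 1 k + g 2 * X 1 0 k + g 3 * X 1 1 k = 0 := by
    intro k
    have h := congrFun hgv k
    simp [Matrix.mulVec, dotProduct, Fin.sum_univ_four] at h
    linear_combination h
  by_cases hD : g 0 * g 3 - g 1 * g 2 = 0
  · -- degenerate case: perturb
    have hccn : ∀ n : ℕ, cc g (((n : ℝ) + 2)⁻¹) ≠ 0 := by
      intro n
      apply cc_ne_zero _ _ _ hg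
      have h1 : (0:ℝ) < (n : ℝ) + 2 := by positivity
      have h2 : ((n : ℝ) + 2)⁻¹ ≤ 2⁻¹ := by
        apply inv_anti₀ (by norm_num)
        have : (0:ℝ) ≤ (n:ℝ) := Nat.cast_nonneg n
        linarith
      have h3 : (0:ℝ) < ((n : ℝ) + 2)⁻¹ := by positivity
      nlinarith
    have hc0 : cc g 0 ≠ 0 := by
      apply cc_ne_zero _ _ (by norm_num) hg
    have hεne : ∀ n : ℕ, (((n : ℝ) + 2)⁻¹ : ℝ) ≠ 0 := by
      intro n; positivity
    apply mem_closure_of_tendsto (FF_tendsto X g hc0)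
    apply Filter.Eventually.of_forall
    intro n
    refine rank4_of_rel _ (gg g (((n : ℝ) + 2)⁻¹)) ?_ ?_ ?_ ?_
      (FF_rel X g _ (hccn n) hrel) (FF_det g _ hD (hεne n) hg)
    · intro k; simp [FF, h02]
    · intro k; simp [FF, h12]
    · intro k; simp [FF, h20]
    · intro k; simp [FF, h21]
  · exact subset_closure (rank4_of_rel X g h02 h12 h20 h21 hrel hD)
end

section
/- Every tensor X : Fin 2 → Fin 3 → Fin 4 → ℂ has border rank at most 4. -/
open Matrix Polynomial

section Aux

variable {R S : Type*} [CommRing R] [CommRing S]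

/-- The vector of signed maximal minors of a `3 × 4` matrix. -/
noncomputable def brMinors (P : Matrix (Fin 3) (Fin 4) R) : Fin 4 → R :=
  fun c => (-1 : R) ^ (c : ℕ) * (P.submatrix id c.succAbove).det

/-- The signed minors vector lies in the kernel. -/
theorem brMinors_mulVec (P : Matrix (Fin 3) (Fin 4) R) : P *ᵥ brMinors P = 0 := by
  funext j
  have h0 : (Matrix.of (Fin.cases (P j) P) : Matrix (Fin 4) (Fin 4) R).det = 0 := by
    apply Matrix.det_zero_of_row_eq (i := 0) (j := j.succ) (Fin.succ_ne_zero j).symm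
    simp [Matrix.of_apply]
    rfl
  rw [Matrix.det_succ_row_zero] at h0
  have hs : ∀ g : Fin 3 → Fin 4, (Matrix.of fun i => (Fin.cases (P j) P i : Fin 4 → R)).submatrix
      Fin.succ g = P.submatrix id g := fun g => rfl
  have hz : (Fin.cases (motive := fun _ => Fin 4 → R) (P j) P 0 : Fin 4 → R) = P j := rfl
  simp only [hs, Matrix.of_apply, hz] at h0
  simpa [Matrix.mulVec, dotProduct, brMinors, mul_comm, mul_assoc, mul_left_comm] using h0

/-- The matrix whose `p`-th column is the signed minors vector of `p • A + B`. -/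
noncomputable def brG (A B : Matrix (Fin 3) (Fin 4) R) : Matrix (Fin 4) (Fin 4) R :=
  Matrix.of fun c p => brMinors (((p : Fin 4) : ℕ) • A + B) c

/-- The key decomposition: if `brG A B` is invertible, the tensor with slices `A`, `B`
has rank at most 4. -/
theorem rankAtMost_of_brG (X : Fin 2 → Fin 3 → Fin 4 → ℂ)
    (h : (brG (Matrix.of (X 0)) (Matrix.of (X 1))).det ≠ 0) : rankAtMost 4 X := by
  set A : Matrix (Fin 3) (Fin 4) ℂ := Matrix.of (X 0) with hA
  set B : Matrix (Fin 3) (Fin 4) ℂ := Matrix.of (X 1) with hB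
  set G : Matrix (Fin 4) (Fin 4) ℂ := brG A B with hG
  have hu : IsUnit G.det := isUnit_iff_ne_zero.mpr h
  refine ⟨fun p i => (-((p : ℕ) : ℂ)) ^ (i : ℕ), fun p j => (A * G) j p, fun p k => G⁻¹ p k, ?_⟩
  intro i j k
  have key : ∀ (M : Matrix (Fin 3) (Fin 4) ℂ), ∑ p, (M * G) j p * G⁻¹ p k = M j k := by
    intro M
    have : (M * G * G⁻¹) j k = M j k := by
      rw [Matrix.mul_assoc, Matrix.mul_nonsing_inv _ hu, Matrix.mul_one]
    simpa [Matrix.mul_apply] using this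
  have hBG : ∀ p : Fin 4, (B * G) j p = -((p : ℕ) : ℂ) * (A * G) j p := by
    intro p
    have h0 : (((p : ℕ) • A + B) *ᵥ brMinors (((p : ℕ)) • A + B)) j = 0 := by
      rw [brMinors_mulVec]; rfl
    have hcol : ∀ (M : Matrix (Fin 3) (Fin 4) ℂ),
        (M * G) j p = (M *ᵥ brMinors (((p:ℕ)) • A + B)) j := by
      intro M
      simp [Matrix.mul_apply, Matrix.mulVec, dotProduct, hG, brG]
    have hexp : (((p : ℕ) • A + B) *ᵥ brMinors (((p : ℕ)) • A + B)) j
        = ((p : ℕ) : ℂ) * (A *ᵥ brMinors (((p:ℕ)) • A + B)) j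
          + (B *ᵥ brMinors (((p:ℕ)) • A + B)) j := by
      simp [Matrix.mulVec, dotProduct, add_mul, Finset.sum_add_distrib, Finset.mul_sum,
        mul_assoc]
    rw [hcol A, hcol B]
    rw [hexp] at h0
    linear_combination h0
  fin_cases i
  · simpa [hA] using (key A).symm
  · show X 1 j k = ∑ p : Fin 4, (-((p:ℕ) : ℂ)) ^ ((1 : Fin 2) : ℕ) * (A * G) j p * G⁻¹ p k
    have h2 : X 1 j k = ∑ p, (B * G) j p * G⁻¹ p k := (key B).symm
    simpa [hBG, mul_assoc] using h2

/-- Top coefficient of the determinant of a matrix of polynomials of bounded degree. -/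
theorem brDet_coeff_top {n d : ℕ} (M : Matrix (Fin n) (Fin n) R[X])
    (h : ∀ i j, (M i j).natDegree ≤ d) :
    M.det.coeff (n * d) = (Matrix.of fun i j => (M i j).coeff d).det := by
  rw [Matrix.det_apply', Matrix.det_apply', finset_sum_coeff]
  refine Finset.sum_congr rfl fun σ _ => ?_
  rw [coeff_intCast_mul]
  congr 1
  have := coeff_prod_of_natDegree_le (s := (Finset.univ : Finset (Fin n)))
    (fun i => M (σ i) i) d (fun i _ => h _ _)
  simpa [Finset.card_univ] using this

theorem brDet_natDegree_le {n d : ℕ} (M : Matrix (Fin n) (Fin n) R[X])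
    (h : ∀ i j, (M i j).natDegree ≤ d) : M.det.natDegree ≤ n * d := by
  rw [Matrix.det_apply']
  refine natDegree_sum_le_of_forall_le _ _ fun σ _ => ?_
  refine (natDegree_mul_le).trans ?_
  rw [natDegree_intCast, zero_add]
  refine (natDegree_prod_le _ _).trans ?_
  calc ∑ i : Fin n, (M (σ i) i).natDegree ≤ ∑ _i : Fin n, d :=
        Finset.sum_le_sum fun i _ => h _ _
    _ = n * d := by simp [Finset.card_univ, mul_comm]

/-- The entrywise-linear pencil of matrices, as a matrix of polynomials. -/
noncomputable def brLin (A A' : Matrix (Fin 3) (Fin 4) R) : Matrix (Fin 3) (Fin 4) R[X] :=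
  Matrix.of fun j k => C (A j k) + X * C (A' j k)

theorem brLin_smul_add (p : ℕ) (A A' B B' : Matrix (Fin 3) (Fin 4) R) :
    p • brLin A A' + brLin B B' = brLin (p • A + B) (p • A' + B') := by
  funext j k
  show p • (C (A j k) + X * C (A' j k)) + (C (B j k) + X * C (B' j k))
      = C ((p • A + B) j k) + X * C ((p • A' + B') j k)
  simp only [Matrix.add_apply, Matrix.smul_apply, nsmul_eq_mul, Polynomial.C_add,
    Polynomial.C_mul, map_natCast]
  ring

theorem brLin_entry_deg (A A' : Matrix (Fin 3) (Fin 4) R) (c : Fin 4) :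
    ∀ i j, (((brLin A A').submatrix id c.succAbove) i j).natDegree ≤ 1 := by
  intro i j
  simp only [Matrix.submatrix_apply, brLin, Matrix.of_apply, id]
  compute_degree

theorem brMinors_lin_natDegree_le (A A' : Matrix (Fin 3) (Fin 4) R) (c : Fin 4) :
    (brMinors (brLin A A') c).natDegree ≤ 3 := by
  refine (natDegree_mul_le).trans ?_
  have h1 : ((-1 : R[X]) ^ (c : ℕ)).natDegree ≤ 0 := natDegree_pow_le.trans (by simp)
  have h2 := brDet_natDegree_le (d := 1) ((brLin A A').submatrix id c.succAbove)
    (brLin_entry_deg A A' c)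
  norm_num at h2
  omega

theorem brMinors_lin_coeff (A A' : Matrix (Fin 3) (Fin 4) R) (c : Fin 4) :
    (brMinors (brLin A A') c).coeff 3 = brMinors A' c := by
  have h3 := brDet_coeff_top (d := 1) ((brLin A A').submatrix id c.succAbove)
    (brLin_entry_deg A A' c)
  have hC : ((-1 : R[X]) ^ (c : ℕ)) = C ((-1 : R) ^ (c : ℕ)) := by
    simp [map_pow]
  have hcm : ∀ i j : Fin 3, (((brLin A A').submatrix id c.succAbove) i j).coeff 1
      = (A'.submatrix id c.succAbove) i j := by
    intro i j
    simp [brLin, coeff_C]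
  unfold brMinors
  rw [hC, coeff_C_mul]
  norm_num at h3
  rw [h3]
  have hm : (Matrix.of fun i j => (brLin A A' i (c.succAbove j)).coeff 1)
      = A'.submatrix id c.succAbove := Matrix.ext fun i j => hcm i j
  rw [hm]

theorem brMinors_map (f : R →+* S) (P : Matrix (Fin 3) (Fin 4) R) (c : Fin 4) :
    brMinors (P.map f) c = f (brMinors P c) := by
  unfold brMinors
  rw [_root_.map_mul, _root_.map_pow, _root_.map_neg, _root_.map_one, RingHom.map_det]
  rfl

theorem brG_map (f : R →+* S) (A B : Matrix (Fin 3) (Fin 4) R) :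
    brG (A.map f) (B.map f) = (brG A B).map f := by
  funext c p
  show brMinors ((p:ℕ) • A.map f + B.map f) c = f (brMinors ((p:ℕ) • A + B) c)
  rw [← brMinors_map]
  congr 1
  funext i j
  simp [Matrix.map_apply]

theorem brLin_map_eval (ε : ℂ) (A A' : Matrix (Fin 3) (Fin 4) ℂ) :
    (brLin A A').map (evalRingHom ε) = A + ε • A' := by
  funext j k
  show eval ε (C (A j k) + X * C (A' j k)) = A j k + ε • A' j k
  rw [eval_add, eval_C, eval_mul, eval_X, eval_C, smul_eq_mul, mul_comm]

theorem brG_lin_coeff (A A' B B' : Matrix (Fin 3) (Fin 4) ℂ) :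
    (brG (brLin A A') (brLin B B')).det.coeff 12 = (brG A' B').det := by
  have hdeg : ∀ c p, ((brG (brLin A A') (brLin B B')) c p).natDegree ≤ 3 := by
    intro c p
    show (brMinors ((p:ℕ) • brLin A A' + brLin B B') c).natDegree ≤ 3
    rw [brLin_smul_add]
    exact brMinors_lin_natDegree_le _ _ c
  have h := brDet_coeff_top (d := 3) (brG (brLin A A') (brLin B B')) hdeg
  norm_num at h
  rw [h]
  congr 1
  funext c p
  show (brMinors ((p:ℕ) • brLin A A' + brLin B B') c).coeff 3 = brMinors ((p:ℕ) • A' + B') c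
  rw [brLin_smul_add, brMinors_lin_coeff]

theorem brG_lin_eval (ε : ℂ) (A A' B B' : Matrix (Fin 3) (Fin 4) ℂ) :
    (brG (brLin A A') (brLin B B')).det.eval ε = (brG (A + ε • A') (B + ε • B')).det := by
  have h1 : (brG (brLin A A') (brLin B B')).det.eval ε
      = (evalRingHom ε) (brG (brLin A A') (brLin B B')).det := rfl
  rw [h1, RingHom.map_det, RingHom.mapMatrix_apply, ← brG_map, brLin_map_eval, brLin_map_eval]

def brA₀ : Matrix (Fin 3) (Fin 4) ℂ := !![1,0,0,0; 0,1,0,0; 0,0,1,0]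
def brB₀ : Matrix (Fin 3) (Fin 4) ℂ := !![0,1,0,0; 0,0,1,0; 0,0,0,1]

theorem brWitness : (brG brA₀ brB₀).det ≠ 0 := by
  have h : brG brA₀ brB₀ = !![1,1,1,1; 0,-1,-2,-3; 0,1,4,9; 0,-1,-8,-27] := by
    funext c p
    fin_cases c <;> fin_cases p <;>
      simp [brG, brMinors, brA₀, brB₀, Matrix.det_fin_three,
        Matrix.submatrix_apply, Fin.succAbove] <;> norm_num
  rw [h]
  simp [Matrix.det_succ_row_zero, Fin.sum_univ_succ, Fin.succAbove]
  norm_num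

end Aux

/-- Every `2 × 3 × 4` complex tensor has border rank at most 4. -/
theorem borderRank_234_le_four (X : Fin 2 → Fin 3 → Fin 4 → ℂ) :
    borderRankAtMost 4 X := by
  set A : Matrix (Fin 3) (Fin 4) ℂ := Matrix.of (X 0) with hA
  set B : Matrix (Fin 3) (Fin 4) ℂ := Matrix.of (X 1) with hB
  set φ : Polynomial ℂ := (brG (brLin A brA₀) (brLin B brB₀)).det with hφ
  have hφne : φ ≠ 0 := by
    intro h
    have := brG_lin_coeff A brA₀ B brB₀
    rw [← hφ, h] at this
    simp at this
    exact brWitness this.symm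
  have hroots : {x : ℂ | φ.IsRoot x}.Finite := Polynomial.finite_setOf_isRoot hφne
  -- the approximating sequence
  set ε : ℕ → ℂ := fun n => ((1 / (n + 1) : ℝ) : ℂ) with hε
  set Y : ℕ → (Fin 2 → Fin 3 → Fin 4 → ℂ) := fun n i j k =>
    X i j k + ε n * (if i = 0 then brA₀ j k else brB₀ j k) with hY
  have htend : Filter.Tendsto Y Filter.atTop (nhds X) := by
    have hε0 : Filter.Tendsto ε Filter.atTop (nhds 0) := by
      have hr : Filter.Tendsto (fun n : ℕ => (1 / (n + 1) : ℝ)) Filter.atTop (nhds 0) :=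
        tendsto_one_div_add_atTop_nhds_zero_nat
      have := (Complex.continuous_ofReal.tendsto 0).comp hr
      simpa [hε, Function.comp_def] using this
    rw [tendsto_pi_nhds]
    intro i
    rw [tendsto_pi_nhds]
    intro j
    rw [tendsto_pi_nhds]
    intro k
    have : Filter.Tendsto (fun n => X i j k + ε n * (if i = 0 then brA₀ j k else brB₀ j k))
        Filter.atTop (nhds (X i j k + 0 * (if i = 0 then brA₀ j k else brB₀ j k))) :=
      ((hε0.mul tendsto_const_nhds).const_add _)
    simpa [hY, mul_ite] using this
  have hinj : Function.Injective ε := by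
    intro a b h
    have hc : ((1 / ((a:ℝ) + 1) : ℝ) : ℂ) = ((1 / ((b:ℝ) + 1) : ℝ) : ℂ) := h
    have h' : (1 / ((a:ℝ) + 1)) = (1 / ((b:ℝ) + 1)) := Complex.ofReal_inj.mp hc
    have ha : ((a:ℝ) + 1) ≠ 0 := by positivity
    have hb : ((b:ℝ) + 1) ≠ 0 := by positivity
    rw [div_eq_div_iff ha hb] at h'
    have h2 : (a:ℝ) = (b:ℝ) := by linarith
    exact_mod_cast h2
  have hev : ∀ᶠ n in Filter.atTop, rankAtMost 4 (Y n) := by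
    have hfin : {n : ℕ | φ.IsRoot (ε n)}.Finite :=
      hroots.preimage (Set.injOn_of_injective hinj)
    have := hfin.eventually_cofinite_notMem
    rw [Nat.cofinite_eq_atTop] at this
    refine this.mono fun n hn => ?_
    have hval : φ.eval (ε n) = (brG (A + ε n • brA₀) (B + ε n • brB₀)).det :=
      brG_lin_eval (ε n) A brA₀ B brB₀
    have hdet : (brG (A + ε n • brA₀) (B + ε n • brB₀)).det ≠ 0 := by
      rw [← hval]; exact hn
    apply rankAtMost_of_brG
    have h0 : Matrix.of (Y n 0) = A + ε n • brA₀ := by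
      funext j k
      simp [hY, hA]
    have h1 : Matrix.of (Y n 1) = B + ε n • brB₀ := by
      funext j k
      simp [hY, hB]
    rw [h0, h1]
    exact hdet
  exact mem_closure_of_tendsto htend (hev.mono fun n hn => hn)
end

section
/- Every tensor Z : Fin 2 → Fin 2 → Fin 3 → ℂ has border rank at most 3. -/
lemma key (Z : Fin 2 → Fin 2 → Fin 3 → ℂ) (w00 w01 w10 w11 : ℂ)
    (hd : w00*w11 - w01*w10 ≠ 0)
    (h : ∀ k, w00 * Z 0 0 k + w01 * Z 0 1 k + w10 * Z 1 0 k + w11 * Z 1 1 k = 0) :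
    rankAtMost 3 Z := by
  refine ⟨![![1,0],![0,1],![1,1]],
         ![![w01, -w00],![w11, -w10],![w01+w11, -(w00+w10)]],
         ![fun k => (-(Z 0 0 k*w10 + Z 0 1 k*w11) - (Z 0 0 k*w00 + Z 0 1 k*w01))/(w00*w11 - w01*w10),
           fun k => ((Z 1 0 k*w00 + Z 1 1 k*w01) - (Z 0 0 k*w00 + Z 0 1 k*w01))/(w00*w11 - w01*w10),
           fun k => (Z 0 0 k*w00 + Z 0 1 k*w01)/(w00*w11 - w01*w10)], ?_⟩
  have hd2 : w11*w00 - w01*w10 ≠ 0 := by rwa [mul_comm w11]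
  have hd3 : w00*w11 - w10*w01 ≠ 0 := by rwa [mul_comm w10]
  intro i j k
  fin_cases i <;> fin_cases j <;>
    simp only [Fin.sum_univ_three, Matrix.cons_val_zero, Matrix.cons_val_one, Matrix.head_cons,
      Fin.isValue, Matrix.cons_val_two, Matrix.tail_cons, Fin.mk_one, Fin.mk_zero]
  · field_simp; ring
  · field_simp; ring
  · field_simp; linear_combination (-w01) * h k
  · field_simp; linear_combination w00 * h k

lemma quad3 (w00 w01 w10 w11 : ℂ) (r : ℂ) (hr : r ≠ 0) :
    (w00 + r)*(w11 + r) - w01*w10 ≠ 0 ∨ (w00 + r/2)*(w11 + r/2) - w01*w10 ≠ 0 ∨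
      (w00 + r/3)*(w11 + r/3) - w01*w10 ≠ 0 := by
  by_contra hcon
  push_neg at hcon
  obtain ⟨h1, h2, h3⟩ := hcon
  have : r ^ 2 = 0 := by linear_combination 3*h1 - 12*h2 + 9*h3
  exact hr (by simpa [pow_eq_zero_iff] using this)

lemma goodt (sR : ℝ) (hs : 0 < sR) (κ : ℂ) (w00 w01 w10 w11 : ℂ) (n : ℕ) :
    ∃ t : ℂ, t ≠ 0 ∧ ‖t‖ ≤ 1/(n+1) ∧ ((w00 + t)*(w11 + t) - w01*w10 ≠ 0) ∧
      (sR : ℂ) + t * κ ≠ 0 := by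
  set r : ℝ := min (1/(n+1)) (sR/(‖κ‖+1)) with hrdef
  have hr0 : 0 < r := lt_min (by positivity) (by positivity)
  have hrs : r * (‖κ‖ + 1) ≤ sR := by
    have h2 : r ≤ sR/(‖κ‖+1) := min_le_right _ _
    have h3 : (0:ℝ) < ‖κ‖ + 1 := by positivity
    calc r * (‖κ‖+1) ≤ (sR/(‖κ‖+1)) * (‖κ‖+1) := by nlinarith
    _ = sR := by field_simp
  have hden : ∀ t : ℂ, ‖t‖ ≤ r → (sR : ℂ) + t * κ ≠ 0 := by
    intro t ht h0
    have h1 : (sR : ℂ) = -(t * κ) := eq_neg_of_add_eq_zero_left h0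
    have h2 : sR = ‖t * κ‖ := by
      have := congrArg norm h1
      simpa [Complex.norm_real, abs_of_pos hs] using this
    have h3 : ‖t * κ‖ ≤ r * ‖κ‖ := by
      rw [norm_mul]
      exact mul_le_mul_of_nonneg_right ht (norm_nonneg _)
    nlinarith
  have hrn : r ≤ 1/(n+1) := min_le_left _ _
  have hrn' : r ≤ ((n:ℝ)+1)⁻¹ := by rw [one_div] at hrn; exact hrn
  have hrC : ((r:ℂ)) ≠ 0 := by exact_mod_cast hr0.ne'
  have hnorm1 : ‖(r:ℂ)‖ = r := by simp [Complex.norm_real, abs_of_pos hr0]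
  rcases quad3 w00 w01 w10 w11 (r:ℂ) hrC with h | h | h
  · exact ⟨(r:ℂ), hrC, by rw [hnorm1]; exact hrn, h, hden _ (le_of_eq hnorm1)⟩
  · refine ⟨(r:ℂ)/2, by simpa using hrC, ?_, h, hden _ ?_⟩ <;>
    · rw [norm_div, hnorm1]; simp; linarith [hr0, hrn']
  · refine ⟨(r:ℂ)/3, by simpa using hrC, ?_, h, hden _ ?_⟩ <;>
    · rw [norm_div, hnorm1]; simp; linarith [hr0, hrn']

/-- Every `2 × 2 × 3` complex tensor has border rank at most 3. -/
theorem borderRank_223_le_three (Z : Fin 2 → Fin 2 → Fin 3 → ℂ) :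
    borderRankAtMost 3 Z := by
  obtain ⟨v, hv0, hv⟩ : ∃ v : Fin 4 → ℂ, v ≠ 0 ∧
      ∀ k, v 0 * Z 0 0 k + v 1 * Z 0 1 k + v 2 * Z 1 0 k + v 3 * Z 1 1 k = 0 := by
    set A : Matrix (Fin 3) (Fin 4) ℂ := fun k => ![Z 0 0 k, Z 0 1 k, Z 1 0 k, Z 1 1 k] with hA
    have hrn := LinearMap.finrank_range_add_finrank_ker A.mulVecLin
    have hle : Module.finrank ℂ (LinearMap.range A.mulVecLin) ≤ 3 := by
      have := Submodule.finrank_le (LinearMap.range A.mulVecLin)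
      simpa using this
    have hker : LinearMap.ker A.mulVecLin ≠ ⊥ := by
      intro hbot
      rw [hbot, finrank_bot] at hrn
      simp [Module.finrank_pi] at hrn
      omega
    obtain ⟨v, hvmem, hv0⟩ := Submodule.ne_bot_iff _ |>.1 hker
    refine ⟨v, hv0, fun k => ?_⟩
    have h2 : A.mulVec v = 0 := hvmem
    have h3 := congrFun h2 k
    simp [Matrix.mulVec, dotProduct, Fin.sum_univ_four, hA] at h3
    linear_combination h3
  -- positivity of norm squared sum
  set sR : ℝ := Complex.normSq (v 0) + Complex.normSq (v 1) + Complex.normSq (v 2) +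
      Complex.normSq (v 3) with hsR
  have hs : 0 < sR := by
    rcases lt_or_ge 0 sR with h | h
    · exact h
    · exfalso
      have n0 := Complex.normSq_nonneg (v 0)
      have n1 := Complex.normSq_nonneg (v 1)
      have n2 := Complex.normSq_nonneg (v 2)
      have n3 := Complex.normSq_nonneg (v 3)
      have e0 : v 0 = 0 := Complex.normSq_eq_zero.1 (le_antisymm (by nlinarith) n0)
      have e1 : v 1 = 0 := Complex.normSq_eq_zero.1 (le_antisymm (by nlinarith) n1)
      have e2 : v 2 = 0 := Complex.normSq_eq_zero.1 (le_antisymm (by nlinarith) n2)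
      have e3 : v 3 = 0 := Complex.normSq_eq_zero.1 (le_antisymm (by nlinarith) n3)
      exact hv0 (by funext i; fin_cases i <;> simp [e0, e1, e2, e3])
  set κ : ℂ := (starRingEnd ℂ) (v 0) + (starRingEnd ℂ) (v 3) with hκ
  have hsc : (sR : ℂ) = v 0 * (starRingEnd ℂ) (v 0) + v 1 * (starRingEnd ℂ) (v 1) +
      v 2 * (starRingEnd ℂ) (v 2) + v 3 * (starRingEnd ℂ) (v 3) := by
    simp [hsR, Complex.mul_conj]
  choose t ht0 htn htq htd using fun n => goodt sR hs κ (v 0) (v 1) (v 2) (v 3) n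
  set cw : Fin 2 → Fin 2 → ℂ :=
    ![![(starRingEnd ℂ) (v 0), (starRingEnd ℂ) (v 1)],
      ![(starRingEnd ℂ) (v 2), (starRingEnd ℂ) (v 3)]] with hcw
  set Zs : ℕ → (Fin 2 → Fin 2 → Fin 3 → ℂ) := fun n i j k =>
    Z i j k - (t n * (Z 0 0 k + Z 1 1 k) / ((sR:ℂ) + t n * κ)) * cw i j with hZs
  have hmem : ∀ n, rankAtMost 3 (Zs n) := by
    intro n
    refine key (Zs n) (v 0 + t n) (v 1) (v 2) (v 3 + t n) (htq n) ?_
    intro k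
    simp only [hZs, hcw, Matrix.cons_val_zero, Matrix.cons_val_one, Matrix.head_cons, Fin.isValue]
    field_simp [htd n]
    linear_combination ((sR:ℂ) + t n * κ) * hv k + (t n * (Z 0 0 k + Z 1 1 k)) * hsc
  have htend : Filter.Tendsto Zs Filter.atTop (nhds Z) := by
    have ht0' : Filter.Tendsto t Filter.atTop (nhds 0) :=
      squeeze_zero_norm htn tendsto_one_div_add_atTop_nhds_zero_nat
    rw [tendsto_pi_nhds]
    intro i
    rw [tendsto_pi_nhds]
    intro j
    rw [tendsto_pi_nhds]
    intro k
    have hcont : Filter.Tendsto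
        (fun τ : ℂ => Z i j k - (τ * (Z 0 0 k + Z 1 1 k) / ((sR:ℂ) + τ * κ)) * cw i j)
        (nhds 0) (nhds (Z i j k)) := by
      have hne : (sR:ℂ) + (0:ℂ) * κ ≠ 0 := by
        simpa using (Complex.ofReal_ne_zero.2 hs.ne')
      have : ContinuousAt
          (fun τ : ℂ => Z i j k - (τ * (Z 0 0 k + Z 1 1 k) / ((sR:ℂ) + τ * κ)) * cw i j) 0 := by
        apply ContinuousAt.sub continuousAt_const
        apply ContinuousAt.mul _ continuousAt_const
        exact ContinuousAt.div (continuousAt_id.mul continuousAt_const)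
          (continuousAt_const.add (continuousAt_id.mul continuousAt_const)) hne
      have h0 : Z i j k - ((0:ℂ) * (Z 0 0 k + Z 1 1 k) / ((sR:ℂ) + 0 * κ)) * cw i j
          = Z i j k := by simp
      simpa [ContinuousAt, h0] using this
    exact hcont.comp ht0'
  exact mem_closure_of_tendsto htend (Filter.Eventually.of_forall hmem)
end

section
/- Let Z : Fin 2 → Fin 2 → Fin 3 → ℂ be a tensor whose three frontal slices Z_k : Matrix (Fin 2) (Fin 2) ℂ, (Z_k) i j = Z i j k, are linearly independent over ℂ. Then Z has rank exactly 3: Z has rank at most 3, and Z does not have rank at most 2. -/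
open Module Submodule

/-- The pairing functional `M ↦ ∑ Wᵢⱼ Mᵢⱼ` as a linear map. -/
noncomputable def phiW (W : Matrix (Fin 2) (Fin 2) ℂ) :
    Matrix (Fin 2) (Fin 2) ℂ →ₗ[ℂ] ℂ where
  toFun M := ∑ i, ∑ j, W i j * M i j
  map_add' M N := by
    simp [Matrix.add_apply, mul_add, Finset.sum_add_distrib]
  map_smul' c M := by
    simp only [Matrix.smul_apply, smul_eq_mul, RingHom.id_apply, Finset.mul_sum]
    congr 1; ext i; congr 1; ext j; ring

lemma phiW_indicator (W : Matrix (Fin 2) (Fin 2) ℂ) (i j : Fin 2) :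
    phiW W (Matrix.of fun i' j' => if i' = i ∧ j' = j then (1 : ℂ) else 0) = W i j := by
  fin_cases i <;> fin_cases j <;> simp [phiW, Fin.sum_univ_two]

/-- The hyperplane in `M₂(ℂ)` determined by a nonzero `W` contains three linearly
independent rank-one matrices. -/
lemma rankone_triple (W : Matrix (Fin 2) (Fin 2) ℂ) (hW : W ≠ 0) :
    ∃ x y : Fin 3 → Fin 2 → ℂ,
      (∀ p, phiW W (Matrix.of fun i j => x p i * y p j) = 0) ∧
      LinearIndependent ℂ (fun p : Fin 3 => (Matrix.of fun i j => x p i * y p j :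
        Matrix (Fin 2) (Fin 2) ℂ)) := by
  by_cases hD : W 0 0 * W 1 1 - W 0 1 * W 1 0 ≠ 0
  · refine ⟨![![1,0], ![0,1], ![1,1]],
      ![![W 0 1, -W 0 0], ![W 1 1, -W 1 0], ![W 0 1 + W 1 1, -(W 0 0 + W 1 0)]], ?_, ?_⟩
    · intro p
      fin_cases p <;> simp [phiW, Fin.sum_univ_two] <;> ring
    · rw [Fintype.linearIndependent_iff]
      intro g hg
      have e00 := congrFun (congrFun hg 0) 0
      have e01 := congrFun (congrFun hg 0) 1
      have e10 := congrFun (congrFun hg 1) 0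
      have e11 := congrFun (congrFun hg 1) 1
      simp [Fin.sum_univ_three] at e00 e01 e10 e11
      have hA : (g 0 + g 2) * (W 0 0 * W 1 1 - W 0 1 * W 1 0) = 0 := by
        linear_combination (-(W 1 0)) * e00 - W 1 1 * e01
      have hB : (g 1 + g 2) * (W 0 0 * W 1 1 - W 0 1 * W 1 0) = 0 := by
        linear_combination W 0 0 * e10 + W 0 1 * e11
      have hA0 : g 0 + g 2 = 0 := by
        rcases mul_eq_zero.mp hA with h | h
        · exact h
        · exact absurd h hD
      have hB0 : g 1 + g 2 = 0 := by
        rcases mul_eq_zero.mp hB with h | h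
        · exact h
        · exact absurd h hD
      have h1 : g 2 * W 1 1 = 0 := by linear_combination e00 - W 0 1 * hA0
      have h3 : g 2 * W 0 1 = 0 := by linear_combination e10 - W 1 1 * hB0
      have hg2 : g 2 * (W 0 0 * W 1 1 - W 0 1 * W 1 0) = 0 := by
        linear_combination W 0 0 * h1 - W 1 0 * h3
      have hg20 : g 2 = 0 := by
        rcases mul_eq_zero.mp hg2 with h | h
        · exact h
        · exact absurd h hD
      intro p
      fin_cases p
      · simpa [hg20] using hA0
      · simpa [hg20] using hB0
      · exact hg20
  · push_neg at hD
    have hex : W 0 0 ≠ 0 ∨ W 0 1 ≠ 0 ∨ W 1 0 ≠ 0 ∨ W 1 1 ≠ 0 := by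
      by_contra hc
      push_neg at hc
      obtain ⟨h1, h2, h3, h4⟩ := hc
      apply hW
      ext i j
      fin_cases i <;> fin_cases j <;> simpa
    rcases hex with h0 | h0 | h0 | h0
    · -- W 0 0 ≠ 0
      refine ⟨![![W 1 0, -W 0 0], ![W 1 0, -W 0 0], ![1,0]],
        ![![1,0], ![0,1], ![W 0 1, -W 0 0]], ?_, ?_⟩
      · intro p
        fin_cases p <;> simp [phiW, Fin.sum_univ_two] <;>
          (first | ring1 | linear_combination hD | linear_combination -hD)
      · rw [Fintype.linearIndependent_iff]
        intro g hg
        have e00 := congrFun (congrFun hg 0) 0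
        have e01 := congrFun (congrFun hg 0) 1
        have e10 := congrFun (congrFun hg 1) 0
        have e11 := congrFun (congrFun hg 1) 1
        simp [Fin.sum_univ_three] at e00 e01 e10 e11
        have hg0 : g 0 = 0 := e10.resolve_right h0
        have hg1 : g 1 = 0 := e11.resolve_right h0
        have hg2 : g 2 = 0 := by
          have := mul_eq_zero.mp (show g 2 * W 0 0 = 0 by
            linear_combination -e01 + W 1 0 * hg1)
          tauto
        intro p; fin_cases p <;> assumption
    · -- W 0 1 ≠ 0
      refine ⟨![![W 1 1, -W 0 1], ![W 1 1, -W 0 1], ![1,0]],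
        ![![1,0], ![0,1], ![W 0 1, -W 0 0]], ?_, ?_⟩
      · intro p
        fin_cases p <;> simp [phiW, Fin.sum_univ_two] <;>
          (first | ring1 | linear_combination hD | linear_combination -hD)
      · rw [Fintype.linearIndependent_iff]
        intro g hg
        have e00 := congrFun (congrFun hg 0) 0
        have e01 := congrFun (congrFun hg 0) 1
        have e10 := congrFun (congrFun hg 1) 0
        have e11 := congrFun (congrFun hg 1) 1
        simp [Fin.sum_univ_three] at e00 e01 e10 e11
        have hg0 : g 0 = 0 := e10.resolve_right h0
        have hg1 : g 1 = 0 := e11.resolve_right h0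
        have hg2 : g 2 = 0 := by
          have := mul_eq_zero.mp (show g 2 * W 0 1 = 0 by
            linear_combination e00 - W 1 1 * hg0)
          tauto
        intro p; fin_cases p <;> assumption
    · -- W 1 0 ≠ 0
      refine ⟨![![W 1 0, -W 0 0], ![W 1 0, -W 0 0], ![0,1]],
        ![![1,0], ![0,1], ![W 1 1, -W 1 0]], ?_, ?_⟩
      · intro p
        fin_cases p <;> simp [phiW, Fin.sum_univ_two] <;>
          (first | ring1 | linear_combination hD | linear_combination -hD)
      · rw [Fintype.linearIndependent_iff]
        intro g hg
        have e00 := congrFun (congrFun hg 0) 0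
        have e01 := congrFun (congrFun hg 0) 1
        have e10 := congrFun (congrFun hg 1) 0
        have e11 := congrFun (congrFun hg 1) 1
        simp [Fin.sum_univ_three] at e00 e01 e10 e11
        have hg0 : g 0 = 0 := e00.resolve_right h0
        have hg1 : g 1 = 0 := e01.resolve_right h0
        have hg2 : g 2 = 0 := by
          have := mul_eq_zero.mp (show g 2 * W 1 0 = 0 by
            linear_combination -e11 - W 0 0 * hg1)
          tauto
        intro p; fin_cases p <;> assumption
    · -- W 1 1 ≠ 0
      refine ⟨![![W 1 1, -W 0 1], ![W 1 1, -W 0 1], ![0,1]],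
        ![![1,0], ![0,1], ![W 1 1, -W 1 0]], ?_, ?_⟩
      · intro p
        fin_cases p <;> simp [phiW, Fin.sum_univ_two] <;>
          (first | ring1 | linear_combination hD | linear_combination -hD)
      · rw [Fintype.linearIndependent_iff]
        intro g hg
        have e00 := congrFun (congrFun hg 0) 0
        have e01 := congrFun (congrFun hg 0) 1
        have e10 := congrFun (congrFun hg 1) 0
        have e11 := congrFun (congrFun hg 1) 1
        simp [Fin.sum_univ_three] at e00 e01 e10 e11
        have hg0 : g 0 = 0 := e00.resolve_right h0
        have hg1 : g 1 = 0 := e01.resolve_right h0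
        have hg2 : g 2 = 0 := by
          have := mul_eq_zero.mp (show g 2 * W 1 1 = 0 by
            linear_combination e10 + W 0 1 * hg0)
          tauto
        intro p; fin_cases p <;> assumption

/-- The pairing-with-slices map `W ↦ (∑ᵢⱼ Wᵢⱼ Zᵢⱼₖ)ₖ`. -/
noncomputable def LZ (Z : Fin 2 → Fin 2 → Fin 3 → ℂ) :
    Matrix (Fin 2) (Fin 2) ℂ →ₗ[ℂ] (Fin 3 → ℂ) where
  toFun W := fun k => ∑ i, ∑ j, W i j * Z i j k
  map_add' M N := by
    ext k
    simp [Matrix.add_apply, add_mul, Finset.sum_add_distrib]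
  map_smul' c M := by
    ext k
    simp only [Matrix.smul_apply, smul_eq_mul, RingHom.id_apply, Pi.smul_apply,
      Finset.mul_sum]
    congr 1; ext i; congr 1; ext j; ring

/-- A `2 × 2 × 3` tensor with linearly independent frontal slices has rank exactly 3. -/
theorem rank_223_eq_three_of_linearIndependent (Z : Fin 2 → Fin 2 → Fin 3 → ℂ)
    (h : LinearIndependent ℂ fun k : Fin 3 => (Matrix.of fun i j => Z i j k :
      Matrix (Fin 2) (Fin 2) ℂ)) :
    rankAtMost 3 Z ∧ ¬ rankAtMost 2 Z := by
  constructor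
  · -- rank at most 3
    -- find a nonzero W annihilating all slices
    have hker : LinearMap.ker (LZ Z) ≠ ⊥ := by
      intro hbot
      have hinj : Function.Injective (LZ Z) := LinearMap.ker_eq_bot.mp hbot
      have hle := LinearMap.finrank_le_finrank_of_injective hinj
      have h4 : finrank ℂ (Matrix (Fin 2) (Fin 2) ℂ) = 4 := by
        simp [Module.finrank_matrix]
      have h3 : finrank ℂ (Fin 3 → ℂ) = 3 := by simp
      omega
    obtain ⟨W, hWmem, hWne⟩ := Submodule.exists_mem_ne_zero_of_ne_bot hker
    have hW0 : ∀ k, ∑ i, ∑ j, W i j * Z i j k = 0 := by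
      intro k
      have := LinearMap.mem_ker.mp hWmem
      exact congrFun this k
    -- φ := phiW W is nonzero, hence has 3-dimensional kernel
    have hφne : phiW W ≠ 0 := by
      intro hzero
      apply hWne
      ext i j
      have := LinearMap.congr_fun hzero
        (Matrix.of fun i' j' => if i' = i ∧ j' = j then (1 : ℂ) else 0)
      rw [phiW_indicator] at this
      simpa using this
    have hrange : LinearMap.range (phiW W) = ⊤ := by
      obtain ⟨M0, hM0⟩ : ∃ M0, phiW W M0 ≠ 0 := by
        by_contra hc
        push_neg at hc
        exact hφne (by ext M; simp [hc M])
      rw [LinearMap.range_eq_top]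
      intro cval
      refine ⟨(cval / phiW W M0) • M0, ?_⟩
      rw [map_smul, smul_eq_mul]
      field_simp
    have hkerdim : finrank ℂ (LinearMap.ker (phiW W)) = 3 := by
      have hrn := LinearMap.finrank_range_add_finrank_ker (phiW W)
      rw [hrange, finrank_top] at hrn
      have h4 : finrank ℂ (Matrix (Fin 2) (Fin 2) ℂ) = 4 := by
        simp [Module.finrank_matrix]
      have h1 : finrank ℂ ℂ = 1 := Module.finrank_self ℂ
      omega
    obtain ⟨x, y, hxy0, hxyLI⟩ := rankone_triple W hWne
    set M : Fin 3 → Matrix (Fin 2) (Fin 2) ℂ :=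
      fun p => Matrix.of fun i j => x p i * y p j with hM
    have hle : span ℂ (Set.range M) ≤ LinearMap.ker (phiW W) := by
      rw [span_le]
      rintro _ ⟨p, rfl⟩
      exact LinearMap.mem_ker.mpr (hxy0 p)
    have hspan : span ℂ (Set.range M) = LinearMap.ker (phiW W) := by
      apply Submodule.eq_of_le_of_finrank_le hle
      rw [hkerdim, finrank_span_eq_card hxyLI]
      simp
    have hmem : ∀ k, (Matrix.of fun i j => Z i j k : Matrix (Fin 2) (Fin 2) ℂ)
        ∈ span ℂ (Set.range M) := by
      intro k
      rw [hspan, LinearMap.mem_ker]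
      show ∑ i, ∑ j, W i j * Z i j k = 0
      exact hW0 k
    have hc : ∀ k, ∃ cc : Fin 3 → ℂ,
        ∑ p, cc p • M p = (Matrix.of fun i j => Z i j k) := by
      intro k
      exact (mem_span_range_iff_exists_fun ℂ).mp (hmem k)
    choose cc hcc using hc
    refine ⟨fun p i => x p i, fun p j => y p j, fun p k => cc k p, ?_⟩
    intro i j k
    have := congrFun (congrFun (hcc k) i) j
    simp only [Matrix.sum_apply, Finset.sum_apply, Matrix.smul_apply, Matrix.of_apply,
      smul_eq_mul, hM] at this
    rw [← this]
    apply Finset.sum_congr rfl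
    intro p _
    ring
  · -- not rank at most 2
    rintro ⟨a, b, c, hc⟩
    set N : Fin 2 → Matrix (Fin 2) (Fin 2) ℂ :=
      fun p => Matrix.of fun i j => a p i * b p j with hN
    have hmem : ∀ k, (Matrix.of fun i j => Z i j k : Matrix (Fin 2) (Fin 2) ℂ)
        ∈ span ℂ (Set.range N) := by
      intro k
      rw [mem_span_range_iff_exists_fun]
      refine ⟨fun p => c p k, ?_⟩
      ext i j
      simp only [Matrix.sum_apply, Finset.sum_apply, Matrix.smul_apply, Matrix.of_apply,
        smul_eq_mul, hN]
      rw [hc i j k]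
      apply Finset.sum_congr rfl
      intro p _
      ring
    haveI : FiniteDimensional ℂ (span ℂ (Set.range N)) :=
      FiniteDimensional.span_of_finite ℂ (Set.finite_range N)
    set v : Fin 3 → span ℂ (Set.range N) :=
      fun k => ⟨Matrix.of fun i j => Z i j k, hmem k⟩ with hv
    have hvLI : LinearIndependent ℂ v := by
      apply LinearIndependent.of_comp (Submodule.subtype _)
      exact h
    have h3 : (3 : ℕ) ≤ finrank ℂ (span ℂ (Set.range N)) := by
      simpa using hvLI.fintype_card_le_finrank
    have h2 : finrank ℂ (span ℂ (Set.range N)) ≤ 2 := by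
      simpa [Set.finrank] using finrank_range_le_card (R := ℂ) N
    omega
end

section
/- Let X : Fin 4 → Fin 4 → Fin 4 → ℂ have border rank at most 4, and let X_k : Matrix (Fin 4) (Fin 4) ℂ, (X_k) i j = X i j k, be its frontal slices. Then for all coefficient vectors u, v, w : Fin 4 → ℂ, setting U₁ = ∑ k, u k • X_k, U₂ = ∑ k, v k • X_k, U₃ = ∑ k, w k • X_k, the Strassen commutative condition holds: U₁ * (adjugate U₂) * U₃ = U₃ * (adjugate U₂) * U₁. -/
open Matrix

lemma key_aux (A B : Matrix (Fin 4) (Fin 4) ℂ) (d₁ d₂ d₃ : Fin 4 → ℂ) :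
    (Aᵀ * diagonal d₁ * B) * adjugate (Aᵀ * diagonal d₂ * B) * (Aᵀ * diagonal d₃ * B)
      = (B.det * Aᵀ.det) • (Aᵀ * (diagonal d₁ * adjugate (diagonal d₂) * diagonal d₃) * B) := by
  rw [adjugate_mul_distrib, adjugate_mul_distrib]
  have h1 : B * adjugate B = B.det • (1 : Matrix (Fin 4) (Fin 4) ℂ) := mul_adjugate B
  have h2 : adjugate Aᵀ * Aᵀ = Aᵀ.det • (1 : Matrix (Fin 4) (Fin 4) ℂ) := adjugate_mul Aᵀ
  calc (Aᵀ * diagonal d₁ * B) * (adjugate B * (adjugate (diagonal d₂) * adjugate Aᵀ))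
        * (Aᵀ * diagonal d₃ * B)
      = Aᵀ * diagonal d₁ * (B * adjugate B) * adjugate (diagonal d₂)
          * (adjugate Aᵀ * Aᵀ) * diagonal d₃ * B := by
        simp only [Matrix.mul_assoc]
    _ = (B.det * Aᵀ.det) • (Aᵀ * (diagonal d₁ * adjugate (diagonal d₂) * diagonal d₃) * B) := by
        rw [h1, h2]
        simp only [Matrix.mul_smul, Matrix.smul_mul, Matrix.mul_one, Matrix.one_mul,
          smul_smul, Matrix.mul_assoc, mul_comm Aᵀ.det B.det]

lemma diag_comm (d₁ d₂ d₃ : Fin 4 → ℂ) :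
    diagonal d₁ * adjugate (diagonal d₂) * diagonal d₃
      = diagonal d₃ * adjugate (diagonal d₂) * diagonal d₁ := by
  simp only [adjugate_diagonal, diagonal_mul_diagonal]
  ext i j
  by_cases hij : i = j <;> simp [diagonal_apply, hij] <;> ring

lemma slice_eq (Y : Fin 4 → Fin 4 → Fin 4 → ℂ)
    (a b c : Fin 4 → Fin 4 → ℂ)
    (h : ∀ i j k, Y i j k = ∑ p, a p i * b p j * c p k) (u : Fin 4 → ℂ) :
    ∑ k, u k • (Matrix.of fun i j => Y i j k)
      = (Matrix.of a)ᵀ * diagonal (fun p => ∑ k, u k * c p k) * Matrix.of b := by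
  ext i j
  rw [Matrix.mul_assoc]
  simp only [Matrix.sum_apply, Matrix.smul_apply, Matrix.of_apply, smul_eq_mul,
    Matrix.mul_apply, Matrix.diagonal_apply, ite_mul, zero_mul, Finset.sum_ite_eq,
    Finset.mem_univ, if_true, Matrix.transpose_apply, h]
  simp only [Finset.mul_sum, Finset.sum_mul]
  rw [Finset.sum_comm]
  exact Finset.sum_congr rfl fun p _ => Finset.sum_congr rfl fun k _ => by ring

lemma rank_case (Y : Fin 4 → Fin 4 → Fin 4 → ℂ) (h : rankAtMost 4 Y) (u v w : Fin 4 → ℂ) :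
    (∑ k, u k • (Matrix.of fun i j => Y i j k)) *
      adjugate (∑ k, v k • (Matrix.of fun i j => Y i j k)) *
      (∑ k, w k • (Matrix.of fun i j => Y i j k))
    = (∑ k, w k • (Matrix.of fun i j => Y i j k)) *
        adjugate (∑ k, v k • (Matrix.of fun i j => Y i j k)) *
        (∑ k, u k • (Matrix.of fun i j => Y i j k)) := by
  obtain ⟨a, b, c, hab⟩ := h
  rw [slice_eq Y a b c hab u, slice_eq Y a b c hab v, slice_eq Y a b c hab w,
    key_aux, key_aux, diag_comm]

lemma cont_slice (u : Fin 4 → ℂ) :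
    Continuous (fun Y : Fin 4 → Fin 4 → Fin 4 → ℂ =>
      ∑ k, u k • (Matrix.of fun i j => Y i j k)) := by
  apply continuous_finset_sum
  intro k _
  apply Continuous.fun_const_smul
  apply continuous_pi
  intro i
  apply continuous_pi
  intro j
  exact (continuous_apply k).comp ((continuous_apply j).comp (continuous_apply i))

/-- Tensors of border rank at most 4 satisfy the Strassen commutative conditions. -/
theorem strassen_commutative_conditions (X : Fin 4 → Fin 4 → Fin 4 → ℂ)
    (hX : borderRankAtMost 4 X) (u v w : Fin 4 → ℂ) :
    let Xs : Fin 4 → Matrix (Fin 4) (Fin 4) ℂ := fun k => Matrix.of fun i j => X i j k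
    let U₁ := ∑ k, u k • Xs k
    let U₂ := ∑ k, v k • Xs k
    let U₃ := ∑ k, w k • Xs k
    U₁ * (adjugate U₂) * U₃ = U₃ * (adjugate U₂) * U₁ := by
  intro Xs U₁ U₂ U₃
  have hclosed : IsClosed {Y : Fin 4 → Fin 4 → Fin 4 → ℂ |
      (∑ k, u k • (Matrix.of fun i j => Y i j k)) *
        adjugate (∑ k, v k • (Matrix.of fun i j => Y i j k)) *
        (∑ k, w k • (Matrix.of fun i j => Y i j k))
      = (∑ k, w k • (Matrix.of fun i j => Y i j k)) *
          adjugate (∑ k, v k • (Matrix.of fun i j => Y i j k)) *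
          (∑ k, u k • (Matrix.of fun i j => Y i j k))} := by
    apply isClosed_eq
    · exact (((cont_slice u).matrix_mul (cont_slice v).matrix_adjugate).matrix_mul (cont_slice w))
    · exact (((cont_slice w).matrix_mul (cont_slice v).matrix_adjugate).matrix_mul (cont_slice u))
  have := closure_minimal (fun Y hY => rank_case Y hY u v w) hclosed hX
  exact this
end

section
/- Let X : Fin 3 → Fin 3 → Fin 4 → ℂ have border rank at most 4, and let X_k : Matrix (Fin 3) (Fin 3) ℂ, (X_k) i j = X i j k, be its frontal slices. Then there exist nonzero matrices L, R : Matrix (Fin 3) (Fin 3) ℂ such that L * X_k is symmetric and X_k * R is symmetric for all k : Fin 4 (the symmetrization conditions: L X_k − X_kᵀ Lᵀ = 0 and X_k R − Rᵀ X_kᵀ = 0 for k = 1,…,4). -/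
open Matrix

namespace SymAux

abbrev E := Fin 3 → Fin 3 → Fin 4 → ℂ
abbrev V := Fin 3 → Fin 3 → ℂ
abbrev M3 := Matrix (Fin 3) (Fin 3) ℂ

/-- entrywise symmetrization condition -/
def Q (X : E) (L : V) : Prop :=
  ∀ (k : Fin 4) (i j : Fin 3), ∑ m, L i m * X m j k = ∑ m, L j m * X m i k

lemma symL_iff (X : E) (L : V) :
    (∀ k, ((Matrix.of L) * Matrix.of fun i j => X i j k)ᵀ
        = (Matrix.of L) * Matrix.of fun i j => X i j k) ↔ Q X L := by
  constructor
  · intro h k i j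
    have := congrFun (congrFun (h k) j) i
    simpa [Matrix.mul_apply, Matrix.transpose_apply] using this
  · intro h k
    ext i j
    simpa [Matrix.mul_apply, Matrix.transpose_apply] using (h k j i)

/-- the rank-one symmetrizing map -/
def psi (b : Fin 3 → ℂ) : (Fin 3 → ℂ) →ₗ[ℂ] M3 where
  toFun v := vecMulVec v b - vecMulVec b v
  map_add' u v := by
    ext i j
    simp [vecMulVec_apply]
    ring
  map_smul' c v := by
    ext i j
    simp [vecMulVec_apply, Matrix.smul_apply, smul_eq_mul]
    ring

lemma psi_rank (b : Fin 3 → ℂ) :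
    Module.finrank ℂ (LinearMap.range (psi b)) ≤ 2 := by
  by_cases hb : b = 0
  · subst hb
    have h0 : psi (0 : Fin 3 → ℂ) = 0 := by
      apply LinearMap.ext
      intro v
      ext i j
      simp [psi, vecMulVec_apply]
    rw [h0, LinearMap.range_zero]
    simp
  · have hker : (ℂ ∙ b) ≤ LinearMap.ker (psi b) := by
      rw [Submodule.span_singleton_le_iff_mem]
      show psi b b = 0
      simp [psi]
    have h1 : 1 ≤ Module.finrank ℂ (LinearMap.ker (psi b)) := by
      calc 1 = Module.finrank ℂ (ℂ ∙ b) := (finrank_span_singleton hb).symm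
        _ ≤ _ := Submodule.finrank_mono hker
    have h2 := LinearMap.finrank_range_add_finrank_ker (psi b)
    have h3 : Module.finrank ℂ (Fin 3 → ℂ) = 3 := by simp
    omega

/-- the full symmetrizing map on L-space -/
noncomputable def Phi (a b : Fin 4 → Fin 3 → ℂ) :
    M3 →ₗ[ℂ] (Π p : Fin 4, LinearMap.range (psi (b p))) where
  toFun L p := ⟨psi (b p) (L.mulVec (a p)), LinearMap.mem_range_self _ _⟩
  map_add' L L' := by
    funext p
    apply Subtype.ext
    simp [Matrix.add_mulVec, map_add]
  map_smul' c L := by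
    funext p
    apply Subtype.ext
    simp [Matrix.smul_mulVec, LinearMap.map_smul]

lemma exists_L (a b : Fin 4 → Fin 3 → ℂ) :
    ∃ L : M3, L ≠ 0 ∧ ∀ p,
      vecMulVec (L.mulVec (a p)) (b p) = vecMulVec (b p) (L.mulVec (a p)) := by
  have hrank : Module.finrank ℂ (Π p : Fin 4, LinearMap.range (psi (b p))) ≤ 8 := by
    rw [Module.finrank_pi_fintype]
    calc ∑ p : Fin 4, Module.finrank ℂ (LinearMap.range (psi (b p)))
        ≤ ∑ _p : Fin 4, 2 := Finset.sum_le_sum fun p _ => psi_rank (b p)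
      _ = 8 := by simp
  have hnotinj : ¬ Function.Injective (Phi a b) := by
    intro hinj
    have := LinearMap.finrank_le_finrank_of_injective hinj
    have h9 : Module.finrank ℂ M3 = 9 := by
      rw [Module.finrank_matrix]
      simp
    omega
  have hker : LinearMap.ker (Phi a b) ≠ ⊥ := by
    intro h
    exact hnotinj (LinearMap.ker_eq_bot.mp h)
  obtain ⟨L, hLmem, hL0⟩ := Submodule.exists_mem_ne_zero_of_ne_bot hker
  refine ⟨L, hL0, fun p => ?_⟩
  have := congrFun (LinearMap.mem_ker.mp hLmem) p
  have h0 : psi (b p) (L.mulVec (a p)) = 0 := by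
    simpa [Phi, Subtype.ext_iff] using this
  have := sub_eq_zero.mp (by simpa [psi] using h0)
  exact this

lemma mul_vecMulVec (L : M3) (u v : Fin 3 → ℂ) :
    L * vecMulVec u v = vecMulVec (L.mulVec u) v := by
  ext i j
  simp [Matrix.mul_apply, vecMulVec_apply, Matrix.mulVec, dotProduct,
    Finset.sum_mul, mul_assoc]

lemma transpose_vecMulVec (u v : Fin 3 → ℂ) :
    (vecMulVec u v)ᵀ = vecMulVec v u := by
  ext i j
  simp [vecMulVec_apply, mul_comm]

lemma slice_eq (X : E) (a b : Fin 4 → Fin 3 → ℂ) (c : Fin 4 → Fin 4 → ℂ)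
    (hX : ∀ i j k, X i j k = ∑ p, a p i * b p j * c p k) (k : Fin 4) :
    (Matrix.of fun i j => X i j k) = ∑ p, c p k • vecMulVec (a p) (b p) := by
  ext i j
  simp [hX, vecMulVec_apply, Matrix.sum_apply, smul_eq_mul]
  apply Finset.sum_congr rfl
  intro p _
  ring

/-- any rank-at-most-4 tensor admits a nonzero left symmetrizer -/
lemma rank4_exists_L {X : E} (hX : rankAtMost 4 X) :
    ∃ L : M3, L ≠ 0 ∧ ∀ k, ((L * Matrix.of fun i j => X i j k)ᵀ
        = L * Matrix.of fun i j => X i j k) := by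
  obtain ⟨a, b, c, habc⟩ := hX
  obtain ⟨L, hL0, hL⟩ := exists_L a b
  refine ⟨L, hL0, fun k => ?_⟩
  rw [slice_eq X a b c habc k, Finset.mul_sum]
  rw [Matrix.transpose_sum]
  apply Finset.sum_congr rfl
  intro p _
  rw [Matrix.mul_smul, Matrix.transpose_smul, mul_vecMulVec, transpose_vecMulVec,
    ← hL p]

/-- the closed set of tensors admitting a unit-norm left symmetrizer -/
def C : Set E := {X | ∃ L : V, ‖L‖ = 1 ∧ Q X L}

instance : CompactSpace (Metric.sphere (0 : V) 1) :=
  isCompact_iff_compactSpace.mp (isCompact_sphere 0 1)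

lemma isClosed_C : IsClosed C := by
  have himg : C = Prod.fst '' {q : E × Metric.sphere (0 : V) 1 | Q q.1 q.2.1} := by
    ext X
    constructor
    · rintro ⟨L, hL, hQ⟩
      exact ⟨(X, ⟨L, by simpa using hL⟩), hQ, rfl⟩
    · rintro ⟨⟨Y, L⟩, hQ, rfl⟩
      exact ⟨L.1, by simpa using L.2, hQ⟩
  rw [himg]
  apply isClosedMap_fst_of_compactSpace
  have hset : {q : E × Metric.sphere (0 : V) 1 | Q q.1 q.2.1}
      = ⋂ (k : Fin 4), ⋂ (i : Fin 3), ⋂ (j : Fin 3),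
        {q : E × Metric.sphere (0 : V) 1 |
          ∑ m, q.2.1 i m * q.1 m j k = ∑ m, q.2.1 j m * q.1 m i k} := by
    ext q
    simp [Q, Set.mem_iInter]
  rw [hset]
  refine isClosed_iInter fun k => isClosed_iInter fun i => isClosed_iInter fun j =>
    isClosed_eq ?_ ?_ <;>
  · apply continuous_finset_sum
    intro m _
    refine Continuous.mul ?_ ?_
    · exact ((continuous_apply m).comp ((continuous_apply _).comp
        (continuous_subtype_val.comp continuous_snd)))
    · exact ((continuous_apply k).comp ((continuous_apply _).comp
        ((continuous_apply m).comp continuous_fst)))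

lemma Q_smul {X : E} {L : V} (c : ℂ) (h : Q X L) : Q X (c • L) := by
  intro k i j
  have := h k i j
  simp only [Pi.smul_apply, smul_eq_mul, mul_assoc, ← Finset.mul_sum]
  rw [this]

lemma rank4_mem_C {X : E} (hX : rankAtMost 4 X) : X ∈ C := by
  obtain ⟨L, hL0, hsym⟩ := rank4_exists_L hX
  have hQ : Q X (fun i j => L i j) := (symL_iff X _).mp (by
    convert hsym using 3 <;> rfl)
  set Lv : V := fun i j => L i j with hLv
  have hLv0 : Lv ≠ 0 := by
    intro h
    apply hL0
    ext i j
    exact congrFun (congrFun h i) j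
  have hn : ‖Lv‖ ≠ 0 := norm_ne_zero_iff.mpr hLv0
  refine ⟨((‖Lv‖ : ℂ))⁻¹ • Lv, ?_, Q_smul _ hQ⟩
  rw [norm_smul]
  simp [norm_inv, hn]

/-- swapping the first two slots -/
def tau (X : E) : E := fun i j k => X j i k

lemma tau_continuous : Continuous tau := by
  apply continuous_pi
  intro i
  apply continuous_pi
  intro j
  apply continuous_pi
  intro k
  exact (continuous_apply k).comp ((continuous_apply i).comp (continuous_apply j))

lemma tau_rank {X : E} (hX : rankAtMost 4 X) : rankAtMost 4 (tau X) := by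
  obtain ⟨a, b, c, h⟩ := hX
  refine ⟨b, a, c, fun i j k => ?_⟩
  rw [tau, h]
  apply Finset.sum_congr rfl
  intro p _
  ring

lemma borderRank_mem_C {X : E} (hX : borderRankAtMost 4 X) : X ∈ C :=
  closure_minimal (fun Y hY => rank4_mem_C hY) isClosed_C hX

end SymAux

open SymAux in
/-- Tensors in `V₄(3,3,4)` satisfy the symmetrization conditions: there exist nonzero
`L, R` such that `L * X_k` and `X_k * R` are symmetric for all frontal slices `X_k`. -/
theorem symmetrization_conditions (X : Fin 3 → Fin 3 → Fin 4 → ℂ)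
    (hX : borderRankAtMost 4 X) :
    ∃ L R : Matrix (Fin 3) (Fin 3) ℂ, L ≠ 0 ∧ R ≠ 0 ∧
      (∀ k : Fin 4, ((L * Matrix.of fun i j => X i j k)ᵀ = L * Matrix.of fun i j => X i j k)) ∧
      (∀ k : Fin 4, (((Matrix.of fun i j => X i j k) * R)ᵀ = (Matrix.of fun i j => X i j k) * R)) := by
  obtain ⟨L, hLn, hLQ⟩ := borderRank_mem_C hX
  have hL : ∀ k, ((Matrix.of L * Matrix.of fun i j => X i j k)ᵀ
      = Matrix.of L * Matrix.of fun i j => X i j k) := (symL_iff X L).mpr hLQ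
  have hL0 : Matrix.of L ≠ 0 := by
    intro h
    rw [show L = (0 : V) from h] at hLn
    simp at hLn
  have hXtau : borderRankAtMost 4 (tau X) :=
    map_mem_closure tau_continuous hX (fun Y hY => tau_rank hY)
  obtain ⟨L', hL'n, hL'Q⟩ := borderRank_mem_C hXtau
  have hL' : ∀ k, ((Matrix.of L' * Matrix.of fun i j => tau X i j k)ᵀ
      = Matrix.of L' * Matrix.of fun i j => tau X i j k) := (symL_iff (tau X) L').mpr hL'Q
  have hL'0 : Matrix.of L' ≠ 0 := by
    intro h
    rw [show L' = (0 : V) from h] at hL'n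
    simp at hL'n
  refine ⟨Matrix.of L, (Matrix.of L')ᵀ, hL0, ?_, hL, ?_⟩
  · intro h
    exact hL'0 (Matrix.transpose_eq_zero.mp h)
  · intro k
    have htr : (Matrix.of fun i j => tau X i j k) = (Matrix.of fun i j => X i j k)ᵀ := by
      ext i j
      rfl
    have h := hL' k
    rw [htr] at h
    calc ((Matrix.of fun i j => X i j k) * (Matrix.of L')ᵀ)ᵀ
        = Matrix.of L' * (Matrix.of fun i j => X i j k)ᵀ := by
          rw [Matrix.transpose_mul, Matrix.transpose_transpose]
      _ = (Matrix.of L' * (Matrix.of fun i j => X i j k)ᵀ)ᵀ := h.symm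
      _ = (Matrix.of fun i j => X i j k) * (Matrix.of L')ᵀ := by
          rw [Matrix.transpose_mul, Matrix.transpose_transpose]
end
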